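/- arXiv:2509.24290 — 6 statements merged into one kernel-verified Lean document; each statement's English description precedes it below -/
import Mathlib

section
/- Let n ≥ 1 and let M_1, …, M_{n+1} ≥ 1 be integers. Let f : [0,M_1) × ⋯ × [0,M_n) → [0,M_{n+1}) be increasing. For each integer vector z = (z_1, …, z_{n+1}) with 1 ≤ z_j ≤ M_j for all j, let I_z = [z_1−1, z_1) × ⋯ × [z_{n+1}−1, z_{n+1}). Then the number of vectors z for which f crosses I_z is at most (∏_{j=1}^{n+1} M_j) − (∏_{j=1}^{n+1} (M_j − 1)). -/
open MeasureTheory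

/-- `f` crosses `S ⊆ ℝ^{n+1}` if both the part of `S` strictly below the graph of `f`
and the part strictly above it have positive Lebesgue measure. -/
def Crosses (n : ℕ) (f : (Fin n → ℝ) → ℝ) (S : Set (Fin (n + 1) → ℝ)) : Prop :=
  0 < volume (S ∩ {p | f (fun j => p j.castSucc) < p (Fin.last n)}) ∧
  0 < volume (S ∩ {p | p (Fin.last n) < f (fun j => p j.castSucc)})

/-- the diagonal shift distance -/
def kkAux (n : ℕ) (M z : Fin (n + 1) → ℕ) : ℕ :=
  Finset.univ.inf' Finset.univ_nonempty
    (fun j => if j = Fin.last n then M (Fin.last n) - z (Fin.last n) else z j - 1)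

/-- the diagonal shift map -/
def phiAux (n : ℕ) (M z : Fin (n + 1) → ℕ) : Fin (n + 1) → ℕ :=
  fun j => if j = Fin.last n then z j + kkAux n M z else z j - kkAux n M z

lemma kkAux_le_ne (n : ℕ) (M z : Fin (n + 1) → ℕ) (j : Fin (n + 1)) (hj : j ≠ Fin.last n) :
    kkAux n M z ≤ z j - 1 := by
  have := Finset.inf'_le
    (f := fun j => if j = Fin.last n then M (Fin.last n) - z (Fin.last n) else z j - 1)
    (Finset.mem_univ j)
  simp only [hj, ↓reduceIte] at this
  exact this

lemma kkAux_le_last (n : ℕ) (M z : Fin (n + 1) → ℕ) :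
    kkAux n M z ≤ M (Fin.last n) - z (Fin.last n) := by
  have := Finset.inf'_le
    (f := fun j => if j = Fin.last n then M (Fin.last n) - z (Fin.last n) else z j - 1)
    (Finset.mem_univ (Fin.last n))
  simp only [↓reduceIte] at this
  exact this

theorem stmt_0 (n : ℕ) (hn : 1 ≤ n) (M : Fin (n + 1) → ℕ) (hM : ∀ j, 1 ≤ M j)
    (f : (Fin n → ℝ) → ℝ)
    (hmono : ∀ x y : Fin n → ℝ, (∀ j, 0 ≤ x j) → (∀ j, x j ≤ y j) →
      (∀ j, y j < (M j.castSucc : ℝ)) → f x ≤ f y)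
    (hmem : ∀ x : Fin n → ℝ, (∀ j, 0 ≤ x j ∧ x j < (M j.castSucc : ℝ)) →
      0 ≤ f x ∧ f x < (M (Fin.last n) : ℝ)) :
    Set.ncard {z : Fin (n + 1) → ℕ |
        (∀ j, 1 ≤ z j ∧ z j ≤ M j) ∧
        Crosses n f (Set.univ.pi fun j => Set.Ico ((z j : ℝ) - 1) (z j))} ≤
      (∏ j, M j) - ∏ j, (M j - 1) := by
  classical
  set S : Set (Fin (n + 1) → ℕ) := {z : Fin (n + 1) → ℕ |
        (∀ j, 1 ≤ z j ∧ z j ≤ M j) ∧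
        Crosses n f (Set.univ.pi fun j => Set.Ico ((z j : ℝ) - 1) (z j))} with hS
  -- key exclusion lemma: a crossed cell cannot strictly dominate another crossed cell
  -- (larger in all x coordinates, smaller in the t coordinate)
  have key : ∀ z ∈ S, ∀ z' ∈ S,
      (∀ j : Fin n, z j.castSucc + 1 ≤ z' j.castSucc) →
      z' (Fin.last n) + 1 ≤ z (Fin.last n) → False := by
    intro z hz z' hz' hdom hlast
    obtain ⟨hzb, hzc⟩ := hz
    obtain ⟨hz'b, hz'c⟩ := hz'
    -- from the "above" part of z, get a point p with p_last < f(x_p)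
    obtain ⟨p, hpI, hpf⟩ := MeasureTheory.nonempty_of_measure_ne_zero hzc.2.ne'
    -- show the "below" part of z' is empty
    refine absurd hz'c.1 ?_
    have hempty : ((Set.univ.pi fun j => Set.Ico ((z' j : ℝ) - 1) (z' j)) ∩
        {p | f (fun j => p j.castSucc) < p (Fin.last n)}) = ∅ := by
      rw [Set.eq_empty_iff_forall_notMem]
      rintro q ⟨hqI, hqf⟩
      simp only [Set.mem_pi, Set.mem_univ, Set.mem_Ico, forall_true_left] at hpI hqI
      simp only [Set.mem_setOf_eq] at hpf hqf
      have hfle : f (fun j => p j.castSucc) ≤ f (fun j => q j.castSucc) := by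
        refine hmono _ _ ?_ ?_ ?_
        · intro j
          have h1 := (hpI j.castSucc).1
          have h2 : (1 : ℝ) ≤ (z j.castSucc : ℝ) := by
            exact_mod_cast (hzb j.castSucc).1
          linarith
        · intro j
          have h1 := (hpI j.castSucc).2
          have h2 := (hqI j.castSucc).1
          have h3 : (z j.castSucc : ℝ) + 1 ≤ (z' j.castSucc : ℝ) := by
            exact_mod_cast hdom j
          linarith
        · intro j
          have h1 := (hqI j.castSucc).2
          have h2 : (z' j.castSucc : ℝ) ≤ (M j.castSucc : ℝ) := by
            exact_mod_cast (hz'b j.castSucc).2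
          linarith
      have h1 := (hqI (Fin.last n)).2
      have h2 : (z' (Fin.last n) : ℝ) + 1 ≤ (z (Fin.last n) : ℝ) := by
        exact_mod_cast hlast
      have h3 := (hpI (Fin.last n)).1
      linarith
    rw [hempty]
    simp
  -- properties of kk on S
  have hkle : ∀ z ∈ S, ∀ j : Fin (n + 1), kkAux n M z ≤ z j - 1 ∨
      (j = Fin.last n) := by
    intro z _ j
    by_cases hj : j = Fin.last n
    · exact Or.inr hj
    · exact Or.inl (kkAux_le_ne n M z j hj)
  -- the injection
  have hsub : ∀ z ∈ S, ∀ j : Fin (n + 1), j ≠ Fin.last n → kkAux n M z + 1 ≤ z j := by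
    intro z hz j hj
    have h1 := kkAux_le_ne n M z j hj
    have h2 := (hz.1 j).1
    omega
  have hphi_eq : ∀ z ∈ S, ∀ j : Fin (n + 1), j ≠ Fin.last n →
      phiAux n M z j + kkAux n M z = z j := by
    intro z hz j hj
    have := hsub z hz j hj
    simp only [phiAux, if_neg hj]
    omega
  have hphi_last : ∀ z : Fin (n + 1) → ℕ,
      phiAux n M z (Fin.last n) = z (Fin.last n) + kkAux n M z := by
    intro z; simp [phiAux]
  -- injectivity (asymmetric version)
  have main : ∀ z ∈ S, ∀ z' ∈ S, kkAux n M z ≤ kkAux n M z' →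
      phiAux n M z = phiAux n M z' → z = z' := by
    intro z hz z' hz' hk hphi
    rcases eq_or_lt_of_le hk with hk | hk
    · funext j
      by_cases hj : j = Fin.last n
      · have h1 := hphi_last z
        have h2 := hphi_last z'
        have := congrFun hphi (Fin.last n)
        subst hj
        omega
      · have h1 := hphi_eq z hz j hj
        have h2 := hphi_eq z' hz' j hj
        have := congrFun hphi j
        omega
    · exfalso
      refine key z hz z' hz' ?_ ?_
      · intro j
        have hj : (j.castSucc : Fin (n + 1)) ≠ Fin.last n :=
          (Fin.castSucc_lt_last j).ne
        have h1 := hphi_eq z hz j.castSucc hj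
        have h2 := hphi_eq z' hz' j.castSucc hj
        have := congrFun hphi j.castSucc
        omega
      · have h1 := hphi_last z
        have h2 := hphi_last z'
        have := congrFun hphi (Fin.last n)
        omega
  -- target finset
  set A : Finset (Fin (n + 1) → ℕ) :=
    Fintype.piFinset (fun j => Finset.Icc 1 (M j)) with hA
  set B : Finset (Fin (n + 1) → ℕ) :=
    Fintype.piFinset (fun j =>
      if j = Fin.last n then Finset.Icc 1 (M j - 1) else Finset.Icc 2 (M j)) with hB
  have hBA : B ⊆ A := by
    intro w hw
    rw [hB, Fintype.mem_piFinset] at hw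
    rw [hA, Fintype.mem_piFinset]
    intro j
    have := hw j
    by_cases hj : j = Fin.last n
    · rw [if_pos hj] at this
      simp only [Finset.mem_Icc] at this ⊢
      omega
    · rw [if_neg hj] at this
      simp only [Finset.mem_Icc] at this ⊢
      omega
  have hcardA : A.card = ∏ j, M j := by
    rw [hA, Fintype.card_piFinset]
    congr 1
    funext j
    rw [Nat.card_Icc]
    omega
  have hcardB : B.card = ∏ j, (M j - 1) := by
    rw [hB, Fintype.card_piFinset]
    refine Finset.prod_congr rfl ?_
    intro j _
    by_cases hj : j = Fin.last n
    · rw [if_pos hj, Nat.card_Icc]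
      omega
    · rw [if_neg hj, Nat.card_Icc]
      have := hM j
      omega
  -- φ maps S into A \ B
  have hmaps : ∀ z ∈ S, phiAux n M z ∈ ((A \ B : Finset _) : Set (Fin (n + 1) → ℕ)) := by
    intro z hz
    simp only [Finset.coe_sdiff, Set.mem_diff, Finset.mem_coe]
    constructor
    · rw [hA, Fintype.mem_piFinset]
      intro j
      simp only [Finset.mem_Icc]
      by_cases hj : j = Fin.last n
      · rw [hj, hphi_last z]
        have h1 := (hz.1 (Fin.last n)).1
        have h2 := (hz.1 (Fin.last n)).2
        have h3 := kkAux_le_last n M z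
        omega
      · have h1 := hphi_eq z hz j hj
        have h2 := (hz.1 j).2
        have h3 := hsub z hz j hj
        omega
    · -- not in B: kkAux is attained somewhere
      obtain ⟨j0, _, hj0⟩ := Finset.exists_mem_eq_inf' (s := (Finset.univ : Finset (Fin (n+1))))
        Finset.univ_nonempty
        (fun j => if j = Fin.last n then M (Fin.last n) - z (Fin.last n) else z j - 1)
      intro hcon
      rw [hB, Fintype.mem_piFinset] at hcon
      have hc := hcon j0
      by_cases hj : j0 = Fin.last n
      · rw [if_pos hj] at hc
        simp only [Finset.mem_Icc] at hc
        have hkval : kkAux n M z = M (Fin.last n) - z (Fin.last n) := by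
          rw [kkAux, hj0, hj]; simp
        have hzl := (hz.1 (Fin.last n)).2
        have hMl := hM (Fin.last n)
        rw [hj] at hc
        rw [hphi_last z, hkval] at hc
        omega
      · rw [if_neg hj] at hc
        simp only [Finset.mem_Icc] at hc
        have hkval : kkAux n M z = z j0 - 1 := by
          rw [kkAux, hj0]; simp [hj]
        have h1 := (hz.1 j0).1
        have hval : phiAux n M z j0 = z j0 - kkAux n M z := by
          simp [phiAux, hj]
        rw [hval, hkval] at hc
        omega
  -- conclude
  have hinj : Set.InjOn (phiAux n M) S := by
    intro z hz z' hz' h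
    rcases le_total (kkAux n M z) (kkAux n M z') with hk | hk
    · exact main z hz z' hz' hk h
    · exact (main z' hz' z hz hk h.symm).symm
  calc S.ncard ≤ (((A \ B : Finset _) : Set (Fin (n + 1) → ℕ))).ncard :=
        Set.ncard_le_ncard_of_injOn (phiAux n M) hmaps hinj
          ((A \ B : Finset _) : Set (Fin (n + 1) → ℕ)).toFinite
    _ = (A \ B).card := Set.ncard_coe_finset _
    _ = A.card - B.card := Finset.card_sdiff_of_subset hBA
    _ = (∏ j, M j) - ∏ j, (M j - 1) := by rw [hcardA, hcardB]
end

section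
/- Let n ≥ 1 and let M_1, …, M_{n+1} ≥ 1 be integers. Let f : [0,M_1) × ⋯ × [0,M_n) → [0,M_{n+1}) be increasing. Let z = (z_1, …, z_{n+1}) and z' = (z'_1, …, z'_{n+1}) be integer vectors with 1 ≤ z_j ≤ M_j and 1 ≤ z'_j ≤ M_j for all j, such that for some integer m ≥ 1 one has z'_i = z_i − m for all 1 ≤ i ≤ n and z'_{n+1} = z_{n+1} + m. If f crosses the unit box I_z = [z_1−1, z_1) × ⋯ × [z_{n+1}−1, z_{n+1}), then f does not cross I_{z'} = [z'_1−1, z'_1) × ⋯ × [z'_{n+1}−1, z'_{n+1}). -/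
open MeasureTheory

theorem stmt_1 (n : ℕ) (hn : 1 ≤ n) (M : Fin (n + 1) → ℕ) (hM : ∀ j, 1 ≤ M j)
    (f : (Fin n → ℝ) → ℝ)
    (hmono : ∀ x y : Fin n → ℝ, (∀ j, 0 ≤ x j) → (∀ j, x j ≤ y j) →
      (∀ j, y j < (M j.castSucc : ℝ)) → f x ≤ f y)
    (hmem : ∀ x : Fin n → ℝ, (∀ j, 0 ≤ x j ∧ x j < (M j.castSucc : ℝ)) →
      0 ≤ f x ∧ f x < (M (Fin.last n) : ℝ))
    (z z' : Fin (n + 1) → ℕ)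
    (hz : ∀ j, 1 ≤ z j ∧ z j ≤ M j) (hz' : ∀ j, 1 ≤ z' j ∧ z' j ≤ M j)
    (m : ℕ) (hm : 1 ≤ m)
    (hfirst : ∀ i : Fin n, z i.castSucc = z' i.castSucc + m)
    (hlast : z' (Fin.last n) = z (Fin.last n) + m)
    (hcross : Crosses n f (Set.univ.pi fun j => Set.Ico ((z j : ℝ) - 1) (z j))) :
    ¬ Crosses n f (Set.univ.pi fun j => Set.Ico ((z' j : ℝ) - 1) (z' j)) := by
  obtain ⟨hbelow, -⟩ := hcross
  obtain ⟨p, hp⟩ := nonempty_of_measure_ne_zero hbelow.ne'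
  obtain ⟨hpbox, hplt⟩ := hp
  rintro ⟨-, habove⟩
  obtain ⟨q, hq⟩ := nonempty_of_measure_ne_zero habove.ne'
  obtain ⟨hqbox, hqlt⟩ := hq
  simp only [Set.mem_pi, Set.mem_univ, Set.mem_Ico, forall_const] at hpbox hqbox
  have hle : f (fun j => q j.castSucc) ≤ f (fun j => p j.castSucc) := by
    apply hmono
    · intro j
      have h1 := (hqbox j.castSucc).1
      have h2 := (hz' j.castSucc).1
      have : (1 : ℝ) ≤ (z' j.castSucc : ℕ) := by exact_mod_cast h2
      linarith
    · intro j
      have h1 := (hqbox j.castSucc).2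
      have h2 := (hpbox j.castSucc).1
      have h3 : (z j.castSucc : ℝ) = (z' j.castSucc : ℝ) + m := by
        exact_mod_cast congrArg (Nat.cast : ℕ → ℝ) (hfirst j)
      have hm' : (1 : ℝ) ≤ (m : ℕ) := by exact_mod_cast hm
      linarith
    · intro j
      have h1 := (hpbox j.castSucc).2
      have h2 := (hz j.castSucc).2
      have : (z j.castSucc : ℝ) ≤ (M j.castSucc : ℝ) := by exact_mod_cast h2
      linarith
  have hql : (z (Fin.last n) : ℝ) ≤ q (Fin.last n) := by
    have h1 := (hqbox (Fin.last n)).1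
    have h3 : (z' (Fin.last n) : ℝ) = (z (Fin.last n) : ℝ) + m := by
      exact_mod_cast congrArg (Nat.cast : ℕ → ℝ) hlast
    have hm' : (1 : ℝ) ≤ (m : ℕ) := by exact_mod_cast hm
    linarith
  have hpl := (hpbox (Fin.last n)).2
  simp only [Set.mem_setOf_eq] at hplt hqlt
  linarith
end

section
/- Let n ≥ 1, let f : [0,1]^n → [0,1) be increasing, let k ≥ 0 and 0 ≤ i ≤ n be integers. Consider the partition of [0,1)^{n+1} into dyadic boxes whose sides have length 2^{−(k+1)} in the first i coordinates and length 2^{−k} in the remaining n+1−i coordinates (there are 2^{k(n+1)+i} such boxes). Then the number of these boxes that f crosses is at most 2^{k(n+1)+i} − (2^{k+1}−1)^i (2^k−1)^{n+1−i}. -/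
open MeasureTheory

/-- The dyadic box indexed by `m`, whose `j`-th side is `[m j / 2 ^ e j, (m j + 1) / 2 ^ e j)`. -/
def dyadicBox (n : ℕ) (e m : Fin (n + 1) → ℕ) : Set (Fin (n + 1) → ℝ) :=
  Set.univ.pi fun j => Set.Ico ((m j : ℝ) / 2 ^ e j) ((m j + 1 : ℝ) / 2 ^ e j)

/-- If box `m` is crossed and box `m'` is strictly "later" on an anti-diagonal
(bigger in all `x`-coordinates, smaller in `t`), then `m'` is not crossed. -/
lemma crosses_not_crosses (n : ℕ) (f : (Fin n → ℝ) → ℝ)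
    (hmono : ∀ x y : Fin n → ℝ, (∀ j, 0 ≤ x j) → (∀ j, x j ≤ y j) →
      (∀ j, y j ≤ 1) → f x ≤ f y)
    (e m m' : Fin (n + 1) → ℕ)
    (hlt : ∀ j : Fin n, m j.castSucc + 1 ≤ m' j.castSucc)
    (hlast : m' (Fin.last n) + 1 ≤ m (Fin.last n))
    (hub : ∀ j : Fin n, m' j.castSucc + 1 ≤ 2 ^ e j.castSucc)
    (hc : Crosses n f (dyadicBox n e m)) :
    ¬ Crosses n f (dyadicBox n e m') := by
  intro hc'
  have h2 : ∀ j : Fin (n + 1), (0 : ℝ) < 2 ^ e j := fun j => by positivity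
  obtain ⟨p, hpbox, hpA⟩ :
      ((dyadicBox n e m) ∩ {p | p (Fin.last n) < f (fun j => p j.castSucc)}).Nonempty := by
    rcases Set.eq_empty_or_nonempty
        ((dyadicBox n e m) ∩ {p | p (Fin.last n) < f (fun j => p j.castSucc)}) with h | h
    · exfalso; have := hc.2; rw [h] at this; simp at this
    · exact h
  obtain ⟨q, hqbox, hqB⟩ :
      ((dyadicBox n e m') ∩ {p | f (fun j => p j.castSucc) < p (Fin.last n)}).Nonempty := by
    rcases Set.eq_empty_or_nonempty
        ((dyadicBox n e m') ∩ {p | f (fun j => p j.castSucc) < p (Fin.last n)}) with h | h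
    · exfalso; have := hc'.1; rw [h] at this; simp at this
    · exact h
  simp only [dyadicBox, Set.mem_pi, Set.mem_univ, Set.mem_Ico, forall_true_left] at hpbox hqbox
  have hxq1 : ∀ j : Fin n, q j.castSucc ≤ 1 := by
    intro j
    have h1 := (hqbox j.castSucc).2
    have h2' := h2 j.castSucc
    have h3 : ((m' j.castSucc : ℝ) + 1) ≤ 2 ^ e j.castSucc := by
      exact_mod_cast hub j
    have h4 : ((m' j.castSucc : ℝ) + 1) / 2 ^ e j.castSucc ≤ 1 := by
      rw [div_le_one h2']; exact h3
    linarith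
  have hxp0 : ∀ j : Fin n, 0 ≤ p j.castSucc := by
    intro j
    have h1 := (hpbox j.castSucc).1
    have h0 : (0 : ℝ) ≤ (m j.castSucc : ℝ) / 2 ^ e j.castSucc := by positivity
    linarith
  have hxpq : ∀ j : Fin n, p j.castSucc ≤ q j.castSucc := by
    intro j
    have h1 := (hpbox j.castSucc).2
    have h2' := (hqbox j.castSucc).1
    have h3 : ((m j.castSucc : ℝ) + 1) / 2 ^ e j.castSucc
        ≤ (m' j.castSucc : ℝ) / 2 ^ e j.castSucc := by
      gcongr
      exact_mod_cast hlt j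
    linarith
  have hff : f (fun j => p j.castSucc) ≤ f (fun j => q j.castSucc) :=
    hmono _ _ hxp0 hxpq hxq1
  have htq : q (Fin.last n) ≤ p (Fin.last n) := by
    have h1 := (hqbox (Fin.last n)).2
    have h2' := (hpbox (Fin.last n)).1
    have h3 : ((m' (Fin.last n) : ℝ) + 1) / 2 ^ e (Fin.last n)
        ≤ (m (Fin.last n) : ℝ) / 2 ^ e (Fin.last n) := by
      gcongr
      exact_mod_cast hlast
    linarith
  simp only [Set.mem_setOf_eq] at hpA hqB
  linarith

lemma prod_ite_count (n i : ℕ) (a b : ℕ) :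
    (∏ j : Fin (n + 1), if (j : ℕ) < i then a else b) = a ^ i * b ^ ((n + 1) - i) ∨
      ¬ i ≤ n + 1 := by
  by_cases hi : i ≤ n + 1
  · left
    rw [Fin.prod_univ_eq_prod_range (fun j => if j < i then a else b)]
    rw [Finset.prod_ite, Finset.prod_const, Finset.prod_const]
    have h1 : (Finset.range (n + 1)).filter (fun j => j < i) = Finset.range i := by
      ext x; simp only [Finset.mem_filter, Finset.mem_range]; omega
    have h2 : (Finset.range (n + 1)).filter (fun j => ¬ j < i) = Finset.Ico i (n + 1) := by
      ext x; simp only [Finset.mem_filter, Finset.mem_range, Finset.mem_Ico]; omega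
    rw [h1, h2, Finset.card_range, Nat.card_Ico]
  · right; exact hi

theorem stmt_3 (n : ℕ) (hn : 1 ≤ n) (f : (Fin n → ℝ) → ℝ)
    (hmono : ∀ x y : Fin n → ℝ, (∀ j, 0 ≤ x j) → (∀ j, x j ≤ y j) →
      (∀ j, y j ≤ 1) → f x ≤ f y)
    (hmem : ∀ x : Fin n → ℝ, (∀ j, 0 ≤ x j ∧ x j ≤ 1) → 0 ≤ f x ∧ f x < 1)
    (k i : ℕ) (hi : i ≤ n) :
    Set.ncard {m : Fin (n + 1) → ℕ |
        (∀ j, m j < 2 ^ (if (j : ℕ) < i then k + 1 else k)) ∧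
        Crosses n f (dyadicBox n (fun j => if (j : ℕ) < i then k + 1 else k) m)} ≤
      2 ^ (k * (n + 1) + i) - (2 ^ (k + 1) - 1) ^ i * (2 ^ k - 1) ^ (n + 1 - i) := by
  classical
  haveI : Nonempty (Fin n) := ⟨⟨0, hn⟩⟩
  set e : Fin (n + 1) → ℕ := fun j => if (j : ℕ) < i then k + 1 else k with he
  have hlaste : e (Fin.last n) = k := by
    simp only [he, Fin.val_last]
    rw [if_neg (by omega)]
  set S : Set (Fin (n + 1) → ℕ) :=
    {m | (∀ j, m j < 2 ^ e j) ∧ Crosses n f (dyadicBox n e m)} with hS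
  show S.ncard ≤ _
  -- the shift amount along the anti-diagonal to reach the minimal box
  set c : (Fin (n + 1) → ℕ) → ℕ := fun m =>
    min (Finset.univ.inf' Finset.univ_nonempty fun j : Fin n => m j.castSucc)
        (2 ^ k - 1 - m (Fin.last n)) with hcdef
  have hcle : ∀ m (j : Fin n), c m ≤ m j.castSucc := fun m j =>
    le_trans (min_le_left _ _) (Finset.inf'_le _ (Finset.mem_univ j))
  have hclast : ∀ m, c m ≤ 2 ^ k - 1 - m (Fin.last n) := fun m => min_le_right _ _
  set φ : (Fin (n + 1) → ℕ) → (Fin (n + 1) → ℕ) := fun m j =>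
    if (j : ℕ) < n then m j - c m else m j + c m with hφ
  have hcastlt : ∀ j : Fin n, ((j.castSucc : Fin (n + 1)) : ℕ) < n := fun j => j.isLt
  have hφc : ∀ m (j : Fin n), φ m j.castSucc = m j.castSucc - c m := by
    intro m j; simp only [hφ, if_pos (hcastlt j)]
  have hφl : ∀ m, φ m (Fin.last n) = m (Fin.last n) + c m := by
    intro m; simp only [hφ, Fin.val_last]; rw [if_neg (lt_irrefl n)]
  have hlastfin : ∀ j : Fin (n + 1), ¬ ((j : ℕ) < n) → j = Fin.last n := by
    intro j hj
    apply Fin.ext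
    have := j.isLt
    simp only [Fin.val_last]
    omega
  -- key: two distinct crossed boxes cannot lie on the same anti-diagonal
  have key : ∀ a ∈ S, ∀ b ∈ S, φ a = φ b → c a < c b → False := by
    intro a ha b hb hab hcc
    refine crosses_not_crosses n f hmono e a b ?_ ?_ ?_ ha.2 hb.2
    · intro j
      have h1 := congrFun hab j.castSucc
      rw [hφc, hφc] at h1
      have h2 := hcle a j
      have h3 := hcle b j
      omega
    · have h1 := congrFun hab (Fin.last n)
      rw [hφl, hφl] at h1
      omega
    · intro j
      have := hb.1 j.castSucc
      omega
  have hinj : Set.InjOn φ S := by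
    intro a ha b hb hab
    have hcc : c a = c b := by
      rcases lt_trichotomy (c a) (c b) with h | h | h
      · exact absurd h (fun h => key a ha b hb hab h)
      · exact h
      · exact absurd h (fun h => key b hb a ha hab.symm h)
    funext j
    by_cases hj : (j : ℕ) < n
    · have h1 := congrFun hab j
      simp only [hφ, if_pos hj] at h1
      have h2 := hcle a ⟨(j : ℕ), hj⟩
      have h3 := hcle b ⟨(j : ℕ), hj⟩
      have hcast : (Fin.castSucc ⟨(j : ℕ), hj⟩ : Fin (n + 1)) = j := Fin.ext rfl
      rw [hcast] at h2 h3
      omega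
    · have hj' := hlastfin j hj
      subst hj'
      have h1 := congrFun hab (Fin.last n)
      rw [hφl, hφl] at h1
      omega
  -- the target set: minimal boxes of anti-diagonals
  set T : Set (Fin (n + 1) → ℕ) := {m | (∀ j, m j < 2 ^ e j) ∧
      ((∃ j : Fin n, m j.castSucc = 0) ∨ m (Fin.last n) = 2 ^ k - 1)} with hT
  have hmaps : Set.MapsTo φ S T := by
    intro a ha
    have hb := ha.1
    have hlastlt : a (Fin.last n) < 2 ^ k := by
      have := hb (Fin.last n); rwa [hlaste] at this
    have hpow1 : 1 ≤ 2 ^ k := Nat.one_le_two_pow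
    constructor
    · intro j
      by_cases hj : (j : ℕ) < n
      · simp only [hφ, if_pos hj]
        exact lt_of_le_of_lt (Nat.sub_le _ _) (hb j)
      · have hj' := hlastfin j hj
        subst hj'
        rw [hφl, hlaste]
        have := hclast a
        omega
    · obtain ⟨j0, _, hj0⟩ := Finset.exists_mem_eq_inf' (Finset.univ_nonempty)
        (fun j : Fin n => a j.castSucc)
      rcases le_total (Finset.univ.inf' Finset.univ_nonempty fun j : Fin n => a j.castSucc)
          (2 ^ k - 1 - a (Fin.last n)) with h | h
      · left
        refine ⟨j0, ?_⟩
        rw [hφc]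
        have hca : c a = a j0.castSucc := by
          rw [hcdef]
          simp only []
          rw [min_eq_left h]
          exact hj0
        omega
      · right
        rw [hφl]
        have hca : c a = 2 ^ k - 1 - a (Fin.last n) := by
          rw [hcdef]; exact min_eq_right h
        omega
  -- counting
  set Gfin : Finset (Fin (n + 1) → ℕ) := Fintype.piFinset fun j => Finset.range (2 ^ e j)
    with hG
  set Cfin : Finset (Fin (n + 1) → ℕ) := Fintype.piFinset fun j =>
      if (j : ℕ) < n then Finset.Ico 1 (2 ^ e j) else Finset.range (2 ^ e j - 1) with hC
  have hsub : Cfin ⊆ Gfin := by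
    intro m hm
    rw [hC, Fintype.mem_piFinset] at hm
    rw [hG, Fintype.mem_piFinset]
    intro j
    have := hm j
    rw [Finset.mem_range]
    split_ifs at this with h
    · rw [Finset.mem_Ico] at this; omega
    · rw [Finset.mem_range] at this; omega
  have hTsub : T ⊆ ↑(Gfin \ Cfin) := by
    intro m hm
    simp only [Finset.coe_sdiff, Set.mem_diff, Finset.mem_coe]
    constructor
    · rw [hG, Fintype.mem_piFinset]
      intro j; rw [Finset.mem_range]; exact hm.1 j
    · intro hmem2
      rw [hC, Fintype.mem_piFinset] at hmem2
      rcases hm.2 with ⟨j, hj⟩ | hj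
      · have := hmem2 j.castSucc
        rw [if_pos (hcastlt j), hj, Finset.mem_Ico] at this
        omega
      · have := hmem2 (Fin.last n)
        rw [if_neg (by simp), hj, hlaste, Finset.mem_range] at this
        omega
  have hTfin : T.Finite := Set.Finite.subset (Finset.finite_toSet _) hTsub
  have harith : ∀ r : ℕ, n + 1 = i + r →
      (2 : ℕ) ^ ((k + 1) * i) * 2 ^ (k * (n + 1 - i)) = 2 ^ (k * (n + 1) + i) := by
    intro r hr
    rw [← pow_add]
    congr 1
    rw [hr]
    have h1 : i + r - i = r := by omega
    rw [h1]; ring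
  have hGcard : Gfin.card = 2 ^ (k * (n + 1) + i) := by
    rw [hG, Fintype.card_piFinset]
    simp only [Finset.card_range]
    have heq : ∀ j : Fin (n + 1), (2 : ℕ) ^ e j = if (j : ℕ) < i then 2 ^ (k + 1) else 2 ^ k := by
      intro j
      rw [he]
      by_cases h : (j : ℕ) < i
      · simp [h]
      · simp [h]
    rw [Finset.prod_congr rfl (fun j _ => heq j)]
    rcases prod_ite_count n i (2 ^ (k + 1)) (2 ^ k) with h | h
    · rw [h, ← pow_mul, ← pow_mul]
      exact harith (n + 1 - i) (by omega)
    · omega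
  have hCcard : Cfin.card = (2 ^ (k + 1) - 1) ^ i * (2 ^ k - 1) ^ (n + 1 - i) := by
    rw [hC, Fintype.card_piFinset]
    have heq : ∀ j : Fin (n + 1),
        ((if (j : ℕ) < n then Finset.Ico 1 (2 ^ e j) else Finset.range (2 ^ e j - 1)).card)
          = (if (j : ℕ) < i then 2 ^ (k + 1) - 1 else 2 ^ k - 1) := by
      intro j
      by_cases hj : (j : ℕ) < n
      · rw [if_pos hj, Nat.card_Ico]
        by_cases h : (j : ℕ) < i
        · simp [he, h]
        · simp [he, h]
      · have hj' : ¬ ((j : ℕ) < i) := by omega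
        rw [if_neg hj, Finset.card_range, if_neg hj']
        simp [he, hj']
    rw [Finset.prod_congr rfl (fun j _ => heq j)]
    rcases prod_ite_count n i (2 ^ (k + 1) - 1) (2 ^ k - 1) with h | h
    · exact h
    · omega
  calc S.ncard ≤ T.ncard := Set.ncard_le_ncard_of_injOn φ hmaps hinj hTfin
    _ ≤ (Gfin \ Cfin).card := by
        rw [← Set.ncard_coe_finset]
        exact Set.ncard_le_ncard hTsub (Finset.finite_toSet _)
    _ = Gfin.card - Cfin.card := Finset.card_sdiff_of_subset hsub
    _ = 2 ^ (k * (n + 1) + i) - (2 ^ (k + 1) - 1) ^ i * (2 ^ k - 1) ^ (n + 1 - i) := by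
        rw [hGcard, hCcard]
end

section
/- Let n ≥ 1, let f : [0,1]^n → [0,1) be increasing, let k ≥ 0 and 0 ≤ i ≤ n be integers. Consider the partition of [0,1)^{n+1} into dyadic boxes whose sides have length 2^{−(k+1)} in the first i coordinates and length 2^{−k} in the remaining n+1−i coordinates. Then the (n+1)-dimensional Lebesgue measure of the union of those boxes that f crosses is at most 1 − (2^{k+1}−1)^i (2^k−1)^{n+1−i} / 2^{k(n+1)+i}. -/
open MeasureTheory

open Finset
open scoped ENNReal

lemma prod_ite_lt {M : Type*} [CommMonoid M] (a b : M) {n i : ℕ} (h : i ≤ n) :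
    ∏ x ∈ Finset.range n, (if x < i then a else b) = a ^ i * b ^ (n - i) := by
  rw [Finset.range_eq_Ico, ← Finset.prod_Ico_consecutive _ (Nat.zero_le i) h]
  rw [Finset.prod_congr rfl (fun x hx => if_pos (Finset.mem_Ico.mp hx).2),
      Finset.prod_congr rfl (fun x hx => if_neg (not_lt.mpr (Finset.mem_Ico.mp hx).1)),
      Finset.prod_const, Finset.prod_const, Nat.card_Ico, Nat.card_Ico, Nat.sub_zero]

lemma sum_ite_lt (a b : ℕ) {n i : ℕ} (h : i ≤ n) :
    ∑ x ∈ Finset.range n, (if x < i then a else b) = a * i + b * (n - i) := by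
  rw [Finset.range_eq_Ico, ← Finset.sum_Ico_consecutive _ (Nat.zero_le i) h]
  rw [Finset.sum_congr rfl (fun x hx => if_pos (Finset.mem_Ico.mp hx).2),
      Finset.sum_congr rfl (fun x hx => if_neg (not_lt.mpr (Finset.mem_Ico.mp hx).1)),
      Finset.sum_const, Finset.sum_const, Nat.card_Ico, Nat.card_Ico, Nat.sub_zero,
      smul_eq_mul, smul_eq_mul, mul_comm, mul_comm (n-i)]

theorem stmt_4 (n : ℕ) (hn : 1 ≤ n) (f : (Fin n → ℝ) → ℝ)
    (hmono : ∀ x y : Fin n → ℝ, (∀ j, 0 ≤ x j) → (∀ j, x j ≤ y j) →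
      (∀ j, y j ≤ 1) → f x ≤ f y)
    (hmem : ∀ x : Fin n → ℝ, (∀ j, 0 ≤ x j ∧ x j ≤ 1) → 0 ≤ f x ∧ f x < 1)
    (k i : ℕ) (hi : i ≤ n) :
    volume (⋃ m ∈ {m : Fin (n + 1) → ℕ |
        (∀ j, m j < 2 ^ (if (j : ℕ) < i then k + 1 else k)) ∧
        Crosses n f (dyadicBox n (fun j => if (j : ℕ) < i then k + 1 else k) m)},
      dyadicBox n (fun j => if (j : ℕ) < i then k + 1 else k) m) ≤
      ENNReal.ofReal
        (1 - ((2 : ℝ) ^ (k + 1) - 1) ^ i * ((2 : ℝ) ^ k - 1) ^ (n + 1 - i) /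
          2 ^ (k * (n + 1) + i)) := by
  classical
  set e : Fin (n+1) → ℕ := fun j => if (j:ℕ) < i then k + 1 else k with he
  set T : Finset (Fin (n+1) → ℕ) :=
    (Fintype.piFinset fun j => Finset.range (2 ^ e j)).filter
      (fun m => Crosses n f (dyadicBox n e m)) with hT
  have hsetT : {m : Fin (n + 1) → ℕ |
        (∀ j, m j < 2 ^ (if (j : ℕ) < i then k + 1 else k)) ∧
        Crosses n f (dyadicBox n (fun j => if (j : ℕ) < i then k + 1 else k) m)} = ↑T := by
    ext m
    simp only [hT, Finset.coe_filter, Set.mem_setOf_eq, Fintype.mem_piFinset, Finset.mem_range, he]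
  rw [hsetT, Finset.set_biUnion_coe]
  -- 1. dyadic boxes are pairwise disjoint
  have hdisj : (↑T : Set (Fin (n+1) → ℕ)).PairwiseDisjoint (dyadicBox n e) := by
    intro m _ m' _ hne
    rw [Function.onFun, Set.disjoint_left]
    intro p hp hp'
    apply hne
    funext j
    have h1 := hp j (Set.mem_univ j)
    have h2 := hp' j (Set.mem_univ j)
    simp only [Set.mem_Ico] at h1 h2
    have hd : (0:ℝ) < 2 ^ e j := by positivity
    have e1 : (m j : ℝ) < m' j + 1 := by
      have := lt_of_le_of_lt h1.1 h2.2
      rwa [div_lt_div_iff_of_pos_right hd] at this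
    have e2 : (m' j : ℝ) < m j + 1 := by
      have := lt_of_le_of_lt h2.1 h1.2
      rwa [div_lt_div_iff_of_pos_right hd] at this
    have : m j ≤ m' j := by exact_mod_cast Nat.lt_succ_iff.mp (by exact_mod_cast e1)
    have : m' j ≤ m j := by exact_mod_cast Nat.lt_succ_iff.mp (by exact_mod_cast e2)
    omega
  have hmeas : ∀ m ∈ T, MeasurableSet (dyadicBox n e m) := fun m _ =>
    MeasurableSet.univ_pi fun j => measurableSet_Ico
  rw [measure_biUnion_finset hdisj hmeas]
  -- 2. volume of each box
  have hsum_e : ∑ j : Fin (n+1), e j = k * (n+1) + i := by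
    rw [he]
    rw [Fin.sum_univ_eq_sum_range (fun x => if x < i then k + 1 else k) (n+1)]
    rw [sum_ite_lt _ _ (le_trans hi (Nat.le_succ n))]
    obtain ⟨c, hc⟩ : ∃ c, n + 1 = i + c := ⟨n + 1 - i, by omega⟩
    have h2 : n.succ - i = c := by omega
    rw [h2, hc]; ring
  have hbox : ∀ m : Fin (n+1) → ℕ, volume (dyadicBox n e m)
      = ENNReal.ofReal ((2:ℝ) ^ (k * (n+1) + i))⁻¹ := by
    intro m
    rw [dyadicBox, volume_pi_pi]
    have : ∀ j : Fin (n+1), volume (Set.Ico ((m j : ℝ) / 2 ^ e j) ((m j + 1 : ℝ) / 2 ^ e j))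
        = ENNReal.ofReal ((2:ℝ) ^ e j)⁻¹ := by
      intro j
      rw [Real.volume_Ico, div_sub_div_same, add_sub_cancel_left, one_div]
    rw [Finset.prod_congr rfl (fun j _ => this j),
        ← ENNReal.ofReal_prod_of_nonneg (fun j _ => by positivity)]
    congr 1
    rw [← hsum_e, ← Finset.prod_pow_eq_pow_sum, ← Finset.prod_inv_distrib]
  rw [Finset.sum_congr rfl fun m _ => hbox m, Finset.sum_const, nsmul_eq_mul]
  -- setup for counting
  set eb : Fin n → ℕ := fun j => if (j:ℕ) < i then k + 1 else k with heb
  have hecast : ∀ j : Fin n, e j.castSucc = eb j := fun j => by simp [he, heb]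
  have helast : e (Fin.last n) = k := by simp [he, Nat.not_lt.mpr hi]
  set G : (Fin n → ℕ) → ℝ := fun b => f (fun j => (b j : ℝ) / 2 ^ eb j) with hG
  set A : (Fin n → ℕ) → ℕ := fun b => ⌊G b * 2 ^ k⌋₊ with hA
  set σ : (Fin n → ℕ) → (Fin n → ℕ) := fun b j => b j + 1 with hσ
  set B : Finset (Fin n → ℕ) := Fintype.piFinset fun j => Finset.range (2 ^ eb j) with hB
  set P : ℕ := 2 ^ (k * n + i) with hP
  set P' : ℕ := (2 ^ (k+1) - 1) ^ i * (2 ^ k - 1) ^ (n - i) with hP'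
  have hGmem : ∀ b : Fin n → ℕ, (∀ j, b j ≤ 2 ^ eb j) → 0 ≤ G b ∧ G b < 1 := by
    intro b hb
    exact hmem _ fun j => ⟨by positivity, by
      rw [div_le_one (by positivity)]; exact_mod_cast hb j⟩
  have hGmono : ∀ b b' : Fin n → ℕ, (∀ j, b j ≤ b' j) → (∀ j, b' j ≤ 2 ^ eb j) →
      G b ≤ G b' := by
    intro b b' hle hub
    refine hmono _ _ (fun j => by positivity)
      (fun j => by
        apply div_le_div_of_nonneg_right ?_ (by positivity)
        exact_mod_cast hle j)
      (fun j => by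
        rw [div_le_one (by positivity)]; exact_mod_cast hub j)
  have hAlt : ∀ b : Fin n → ℕ, (∀ j, b j ≤ 2 ^ eb j) → A b < 2 ^ k := by
    intro b hb
    obtain ⟨h0, h1⟩ := hGmem b hb
    rw [hA, Nat.floor_lt (by positivity)]
    calc G b * 2 ^ k < 1 * 2 ^ k := by
          apply mul_lt_mul_of_pos_right h1 (by positivity)
      _ = ((2 ^ k : ℕ) : ℝ) := by push_cast; ring
  -- the key bounds from crossing
  have hkey : ∀ m ∈ T, A (fun j => m j.castSucc) ≤ m (Fin.last n) ∧
      m (Fin.last n) ≤ A (σ fun j => m j.castSucc) := by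
    intro m hm
    rw [hT, Finset.mem_filter, Fintype.mem_piFinset] at hm
    obtain ⟨hmb, hcross⟩ := hm
    simp only [Finset.mem_range] at hmb
    set b : Fin n → ℕ := fun j => m j.castSucc with hb
    set l : ℕ := m (Fin.last n) with hl
    have hbub : ∀ j, b j < 2 ^ eb j := fun j => by
      have := hmb j.castSucc; rwa [hecast j] at this
    have h2k : (0:ℝ) < 2 ^ k := by positivity
    constructor
    · -- A b ≤ l, from the "above graph" part
      obtain ⟨p, hp, hfp⟩ := nonempty_of_measure_ne_zero (ne_of_gt hcross.1)
      simp only [dyadicBox, Set.mem_pi, Set.mem_univ, forall_true_left, Set.mem_Ico,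
        Set.mem_setOf_eq] at hp hfp
      have hGle : G b ≤ f (fun j => p j.castSucc) := by
        refine hmono _ _ (fun j => by positivity) (fun j => ?_) (fun j => ?_)
        · have := (hp j.castSucc).1; rwa [hecast j] at this
        · have h1 := (hp j.castSucc).2
          rw [hecast j] at h1
          refine le_trans (le_of_lt h1) ?_
          rw [div_le_one (by positivity)]
          have := hbub j; exact_mod_cast this
      have hup : p (Fin.last n) < ((l:ℝ) + 1) / 2 ^ k := by
        have := (hp (Fin.last n)).2; rwa [helast] at this
      have : G b * 2 ^ k < (l:ℝ) + 1 := by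
        have := lt_of_le_of_lt (le_trans hGle (le_of_lt hfp)) hup
        rwa [lt_div_iff₀ h2k] at this
      have hGb0 : 0 ≤ G b := (hGmem b fun j => le_of_lt (hbub j)).1
      have hfl : A b < l + 1 := by
        rw [hA, Nat.floor_lt (mul_nonneg hGb0 (by positivity))]
        push_cast
        exact this
      omega
    · -- l ≤ A (σ b), from the "below graph" part
      obtain ⟨p, hp, hfp⟩ := nonempty_of_measure_ne_zero (ne_of_gt hcross.2)
      simp only [dyadicBox, Set.mem_pi, Set.mem_univ, forall_true_left, Set.mem_Ico,
        Set.mem_setOf_eq] at hp hfp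
      have hGge : f (fun j => p j.castSucc) ≤ G (σ b) := by
        refine hmono _ _ (fun j => ?_) (fun j => ?_) (fun j => ?_)
        · have := (hp j.castSucc).1; rw [hecast j] at this
          exact le_trans (by positivity) this
        · have := (hp j.castSucc).2; rw [hecast j] at this
          refine le_of_lt (lt_of_lt_of_le this ?_)
          apply le_of_eq; congr 1
          simp [hσ, hb]
        · have : (σ b j : ℝ) ≤ 2 ^ eb j := by
            have := hbub j
            have : σ b j ≤ 2 ^ eb j := by simp only [hσ]; omega
            exact_mod_cast this
          rw [div_le_one (by positivity)]; exact this
      have hlo : (l:ℝ) / 2 ^ k ≤ p (Fin.last n) := by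
        have := (hp (Fin.last n)).1; rwa [helast] at this
      have : (l:ℝ) < G (σ b) * 2 ^ k := by
        have := lt_of_le_of_lt hlo (lt_of_lt_of_le hfp hGge)
        rwa [div_lt_iff₀ h2k] at this
      exact Nat.le_floor (le_of_lt this)
  -- fiberwise counting
  have hmap : ∀ m ∈ T, (fun j : Fin n => m j.castSucc) ∈ B := by
    intro m hm
    rw [hT, Finset.mem_filter, Fintype.mem_piFinset] at hm
    rw [hB, Fintype.mem_piFinset]
    intro j
    rw [Finset.mem_range, ← hecast j]
    exact Finset.mem_range.mp (hm.1 j.castSucc)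
  have hfiber : ∀ b ∈ B, (T.filter fun m => (fun j : Fin n => m j.castSucc) = b).card
      ≤ A (σ b) + 1 - A b := by
    intro b hbB
    have hle : (T.filter fun m => (fun j : Fin n => m j.castSucc) = b).card
        ≤ (Finset.Icc (A b) (A (σ b))).card := by
      apply Finset.card_le_card_of_injOn (fun m => m (Fin.last n))
      · intro m hm
        rw [Finset.mem_coe, Finset.mem_filter] at hm
        obtain ⟨hmT, hmb⟩ := hm
        have := hkey m hmT
        rw [hmb] at this
        exact Finset.mem_Icc.mpr this
      · intro m hm m' hm' hll
        simp only [Finset.coe_filter, Set.mem_setOf_eq] at hm hm'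
        funext j
        refine Fin.lastCases ?_ (fun j' => ?_) j
        · exact hll
        · exact (congrFun hm.2 j').trans (congrFun hm'.2 j').symm
    rwa [Nat.card_Icc] at hle
  -- cardinalities
  have hσinj : Function.Injective σ := by
    intro b b' hbb
    funext j
    have := congrFun hbb j
    simpa [hσ] using this
  set C : Finset (Fin n → ℕ) := B.image σ with hC
  have hsum_eb : ∑ j : Fin n, eb j = k * n + i := by
    rw [heb, Fin.sum_univ_eq_sum_range (fun x => if x < i then k + 1 else k) n,
      sum_ite_lt _ _ hi]
    obtain ⟨c, hc⟩ : ∃ c, n = i + c := ⟨n - i, by omega⟩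
    have h2 : n - i = c := by omega
    rw [h2, hc]; ring
  have hcardB : B.card = P := by
    rw [hB, Fintype.card_piFinset]
    simp only [Finset.card_range]
    rw [Finset.prod_pow_eq_pow_sum, hsum_eb, hP]
  have hcardC : C.card = P := by rw [hC, Finset.card_image_of_injective _ hσinj, hcardB]
  have hCB : C ∩ B = Fintype.piFinset fun j => Finset.Ico 1 (2 ^ eb j) := by
    ext c
    simp only [Finset.mem_inter, hC, Finset.mem_image, hB, Fintype.mem_piFinset,
      Finset.mem_range, Finset.mem_Ico]
    constructor
    · rintro ⟨⟨b, hb, rfl⟩, h2⟩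
      exact fun j => ⟨by simp [hσ], h2 j⟩
    · intro h
      refine ⟨⟨fun j => c j - 1, fun j => show c j - 1 < 2 ^ eb j from by
        have := (h j).2; omega, ?_⟩, fun j => (h j).2⟩
      funext j
      simp only [hσ]
      have := (h j).1
      omega
  have hcardCB : (C ∩ B).card = P' := by
    rw [hCB, Fintype.card_piFinset]
    simp only [Nat.card_Ico, heb]
    rw [Fin.prod_univ_eq_prod_range (fun x : ℕ => 2 ^ (if x < i then k+1 else k) - 1) n]
    rw [Finset.prod_congr rfl fun x _ => show 2 ^ (if x < i then k+1 else k) - 1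
      = if x < i then 2 ^ (k+1) - 1 else 2 ^ k - 1 from by split_ifs <;> rfl]
    rw [prod_ite_lt _ _ hi, hP']
  have hAub : ∀ c ∈ C, A c ≤ 2 ^ k - 1 := by
    intro c hc
    rw [hC, Finset.mem_image] at hc
    obtain ⟨b, hbB, rfl⟩ := hc
    rw [hB, Fintype.mem_piFinset] at hbB
    have hub : ∀ j, σ b j ≤ 2 ^ eb j := by
      intro j
      have := Finset.mem_range.mp (hbB j)
      simp only [hσ]; omega
    have := hAlt (σ b) hub
    omega
  have hsumC : ∑ b ∈ B, A (σ b) = ∑ c ∈ C, A c :=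
    (Finset.sum_image fun b _ b' _ h => hσinj h).symm
  have hsplit : ∑ c ∈ C, A c = ∑ c ∈ C ∩ B, A c + ∑ c ∈ C \ B, A c :=
    (Finset.sum_inter_add_sum_sdiff C B A).symm
  have hsubB : ∑ c ∈ C ∩ B, A c ≤ ∑ b ∈ B, A b :=
    Finset.sum_le_sum_of_subset Finset.inter_subset_right
  have hP'leP : P' ≤ P := by
    rw [← hcardCB, ← hcardC]
    exact Finset.card_le_card Finset.inter_subset_left
  have hsdiff : ∑ c ∈ C \ B, A c ≤ (P - P') * (2 ^ k - 1) := by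
    have h1 : (C \ B).card = P - P' := by
      have := Finset.card_inter_add_card_sdiff C B
      omega
    calc ∑ c ∈ C \ B, A c ≤ (C \ B).card • (2 ^ k - 1) :=
        Finset.sum_le_card_nsmul _ _ _ fun c hc => hAub c (Finset.mem_sdiff.mp hc).1
      _ = (P - P') * (2 ^ k - 1) := by rw [h1, smul_eq_mul]
  have hAmono : ∀ b ∈ B, A b ≤ A (σ b) := by
    intro b hbB
    rw [hB, Fintype.mem_piFinset] at hbB
    apply Nat.floor_le_floor
    apply mul_le_mul_of_nonneg_right ?_ (by positivity)
    apply hGmono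
    · intro j; simp [hσ]
    · intro j
      have := Finset.mem_range.mp (hbB j)
      simp only [hσ]; omega
  have hsums : ∑ b ∈ B, (A (σ b) + 1 - A b) ≤ P + (P - P') * (2 ^ k - 1) := by
    have hstep : ∑ b ∈ B, (A (σ b) + 1 - A b) + ∑ b ∈ B, A b
        = ∑ b ∈ B, A (σ b) + B.card := by
      rw [← Finset.sum_add_distrib]
      rw [Finset.sum_congr rfl fun b hb => show A (σ b) + 1 - A b + A b = A (σ b) + 1 from by
        have := hAmono b hb; omega]
      rw [Finset.sum_add_distrib, Finset.sum_const, smul_eq_mul, mul_one]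
    have hfin : ∑ b ∈ B, A (σ b) ≤ ∑ b ∈ B, A b + (P - P') * (2 ^ k - 1) := by
      rw [hsumC, hsplit]
      exact add_le_add hsubB hsdiff
    have hcB : B.card = P := hcardB
    omega
  have hcount : T.card ≤ P + (P - P') * (2 ^ k - 1) := by
    rw [Finset.card_eq_sum_card_fiberwise hmap]
    exact le_trans (Finset.sum_le_sum hfiber) hsums
  -- final arithmetic
  set K : ℕ := P + (P - P') * (2 ^ k - 1) with hK
  calc (T.card : ℝ≥0∞) * ENNReal.ofReal ((2:ℝ) ^ (k * (n+1) + i))⁻¹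
      ≤ (K : ℝ≥0∞) * ENNReal.ofReal ((2:ℝ) ^ (k * (n+1) + i))⁻¹ :=
        mul_le_mul_left (by exact_mod_cast hcount) _
    _ = ENNReal.ofReal ((K : ℝ) * ((2:ℝ) ^ (k * (n+1) + i))⁻¹) := by
        rw [← ENNReal.ofReal_natCast K, ← ENNReal.ofReal_mul (Nat.cast_nonneg K)]
    _ ≤ ENNReal.ofReal (1 - ((2 : ℝ) ^ (k + 1) - 1) ^ i * ((2 : ℝ) ^ k - 1) ^ (n + 1 - i) /
          2 ^ (k * (n + 1) + i)) := by
        apply ENNReal.ofReal_le_ofReal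
        apply le_of_eq
        have hKcast : (K : ℝ) = 2 ^ (k*n+i)
            + (2 ^ (k*n+i) - ((2:ℝ) ^ (k+1) - 1) ^ i * ((2:ℝ) ^ k - 1) ^ (n-i))
              * ((2:ℝ) ^ k - 1) := by
          rw [hK, Nat.cast_add, Nat.cast_mul, Nat.cast_sub hP'leP, Nat.cast_sub Nat.one_le_two_pow, hP, hP']
          push_cast [Nat.cast_sub hP'leP, Nat.cast_sub (Nat.one_le_two_pow),
            hP, hP']
          ring
        rw [hKcast, show k * (n+1) + i = (k*n+i) + k from by ring, pow_add,
          show n + 1 - i = (n-i) + 1 from by omega, pow_succ]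
        have h2k : (0:ℝ) < 2 ^ (k*n+i) * 2 ^ k := by positivity
        field_simp
        ring
end

section
/- Let n ≥ 1, let f : [0,1]^n → [0,1) be increasing, and let k ≥ 0 be an integer. Consider the partition of [0,1)^{n+1} into the 2^{k(n+1)} dyadic boxes of side length 2^{−k}. Then the (n+1)-dimensional Lebesgue measure of the union of those boxes that f crosses is at most (n+1)·2^{−k}. -/
open MeasureTheory

private lemma pow_succ_aux (y N : ℕ) : (y+1)^(N+1) ≤ y^(N+1) + (N+1)*(y+1)^N := by
  induction N with
  | zero => simp
  | succ N ih =>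
    calc (y+1)^(N+2) = (y+1) * (y+1)^(N+1) := by ring
    _ ≤ (y+1) * (y^(N+1) + (N+1)*(y+1)^N) := Nat.mul_le_mul_left _ ih
    _ = (y^(N+2) + y^(N+1)) + (N+1)*(y+1)^(N+1) := by ring
    _ ≤ (y^(N+2) + (y+1)^(N+1)) + (N+1)*(y+1)^(N+1) := by
        have : y^(N+1) ≤ (y+1)^(N+1) := Nat.pow_le_pow_left (by omega) _
        omega
    _ = y^(N+2) + (N+2)*(y+1)^(N+1) := by ring

private lemma sum_card_icc_le (n k : ℕ) (hn : 1 ≤ n) (B : (Fin n → ℕ) → ℕ)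
    (hB : ∀ b c : Fin n → ℕ, (∀ j, b j ≤ c j) → (∀ j, c j ≤ 2^k) → B b ≤ B c)
    (hlt : ∀ b : Fin n → ℕ, (∀ j, b j ≤ 2^k) → B b < 2^k) :
    ∑ b ∈ Fintype.piFinset (fun _ : Fin n => Finset.range (2^k)),
      (Finset.Icc (B b) (B (fun j => b j + 1))).card ≤ (n+1) * (2^k)^n := by
  set G := Fintype.piFinset (fun _ : Fin n => Finset.range (2^k)) with hG
  set σ : (Fin n → ℕ) → (Fin n → ℕ) := fun b j => b j + 1 with hσ
  have hσinj : Function.Injective σ := by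
    intro a b h
    funext j
    have := congrFun h j
    simpa [hσ] using this
  have hmemG : ∀ b ∈ G, ∀ j, b j < 2^k := by
    intro b hb j
    have := Fintype.mem_piFinset.1 hb j
    simpa using this
  have hGcard : G.card = (2^k)^n := by
    simp [hG, Fintype.card_piFinset]
  have hmono' : ∀ b ∈ G, B b ≤ B (σ b) := by
    intro b hb
    exact hB b (σ b) (fun j => Nat.le_succ _) (fun j => hmemG b hb j)
  have h1 : ∀ b ∈ G, (Finset.Icc (B b) (B (σ b))).card = (B (σ b) - B b) + 1 := by
    intro b hb
    rw [Nat.card_Icc]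
    have := hmono' b hb
    omega
  calc ∑ b ∈ G, (Finset.Icc (B b) (B (fun j => b j + 1))).card
      = ∑ b ∈ G, ((B (σ b) - B b) + 1) := Finset.sum_congr rfl h1
    _ = (∑ b ∈ G, (B (σ b) - B b)) + (2^k)^n := by
        rw [Finset.sum_add_distrib, Finset.sum_const, hGcard, smul_eq_mul, mul_one]
    _ ≤ n * (2^k)^n + (2^k)^n := by
        gcongr ?_ + _
        rw [Finset.sum_tsub_distrib _ hmono']
        have hreindex : ∑ b ∈ G, B (σ b) = ∑ c ∈ G.image σ, B c :=
          (Finset.sum_image (fun a _ b _ h => hσinj h)).symm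
        rw [hreindex]
        set G' := G.image σ with hG'
        have hsplit : ∑ c ∈ G' ∩ G, B c + ∑ c ∈ G' \ G, B c = ∑ c ∈ G', B c :=
          Finset.sum_inter_add_sum_sdiff G' G B
        have hsub : ∑ c ∈ G' ∩ G, B c ≤ ∑ b ∈ G, B b :=
          Finset.sum_le_sum_of_subset Finset.inter_subset_right
        have hdiffbd : ∑ c ∈ G' \ G, B c ≤ (G' \ G).card * 2^k := by
          apply Finset.sum_le_card_nsmul
          intro c hc
          have hc' : c ∈ G' := (Finset.mem_sdiff.1 hc).1
          obtain ⟨b, hb, rfl⟩ := Finset.mem_image.1 hc'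
          exact le_of_lt (hlt (σ b) (fun j => hmemG b hb j))
        have hcard : (G' \ G).card ≤ (2^k)^n - (2^k - 1)^n := by
          have h2 : (G' \ G).card + (G' ∩ G).card = G'.card :=
            Finset.card_sdiff_add_card_inter G' G
          have h3 : G'.card = (2^k)^n := by
            rw [hG', Finset.card_image_of_injective _ hσinj, hGcard]
          have h4 : (2^k - 1)^n ≤ (G' ∩ G).card := by
            have hsubset : Fintype.piFinset (fun _ : Fin n => Finset.Icc 1 (2^k - 1)) ⊆ G' ∩ G := by
              intro c hc
              have hc' := fun j => Fintype.mem_piFinset.1 hc j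
              simp only [Finset.mem_Icc] at hc'
              have h2k : 1 ≤ 2^k := Nat.one_le_two_pow
              refine Finset.mem_inter.2 ⟨?_, ?_⟩
              · refine Finset.mem_image.2 ⟨fun j => c j - 1, ?_, ?_⟩
                · refine Fintype.mem_piFinset.2 fun j => ?_
                  simp only [Finset.mem_range]
                  have := (hc' j).2
                  omega
                · funext j
                  have := (hc' j).1
                  simp only [hσ]
                  omega
              · refine Fintype.mem_piFinset.2 fun j => ?_
                simp only [Finset.mem_range]
                have := (hc' j).2
                omega
            calc (2^k - 1)^n
                = (Fintype.piFinset (fun _ : Fin n => Finset.Icc 1 (2^k - 1))).card := by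
                  simp [Fintype.card_piFinset, Nat.card_Icc]
              _ ≤ (G' ∩ G).card := Finset.card_le_card hsubset
          omega
        have hpow : (2^k)^n - (2^k - 1)^n ≤ n * (2^k)^(n-1) := by
          obtain ⟨N, rfl⟩ : ∃ N, n = N + 1 := ⟨n - 1, by omega⟩
          have h2k : 1 ≤ 2^k := Nat.one_le_two_pow
          have := pow_succ_aux (2^k - 1) N
          have he : 2^k - 1 + 1 = 2^k := by omega
          rw [he] at this
          simp only [Nat.add_sub_cancel]
          omega
        calc ∑ c ∈ G', B c - ∑ b ∈ G, B b
            ≤ ∑ c ∈ G' \ G, B c := by omega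
          _ ≤ (G' \ G).card * 2^k := hdiffbd
          _ ≤ ((2^k)^n - (2^k - 1)^n) * 2^k := Nat.mul_le_mul_right _ hcard
          _ ≤ (n * (2^k)^(n-1)) * 2^k := Nat.mul_le_mul_right _ hpow
          _ = n * ((2^k)^(n-1) * 2^k) := by ring
          _ = n * (2^k)^n := by
              congr 1
              rw [← pow_succ]
              congr 1
              omega
    _ = (n+1) * (2^k)^n := by ring

private lemma cross_bounds (n k : ℕ) (f : (Fin n → ℝ) → ℝ)
    (hmono : ∀ x y : Fin n → ℝ, (∀ j, 0 ≤ x j) → (∀ j, x j ≤ y j) →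
      (∀ j, y j ≤ 1) → f x ≤ f y)
    (hmem : ∀ x : Fin n → ℝ, (∀ j, 0 ≤ x j ∧ x j ≤ 1) → 0 ≤ f x ∧ f x < 1)
    (m : Fin (n+1) → ℕ) (hm : ∀ j, m j < 2^k)
    (hc : Crosses n f (dyadicBox n (fun _ => k) m)) :
    ⌊(2:ℝ)^k * f (fun j => (m j.castSucc : ℝ) / 2^k)⌋₊ ≤ m (Fin.last n) ∧
    m (Fin.last n) ≤ ⌊(2:ℝ)^k * f (fun j => ((m j.castSucc : ℝ) + 1) / 2^k)⌋₊ := by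
  have hcpos : (0:ℝ) < 2^k := by positivity
  have hcast : ∀ j : Fin (n+1), (m j : ℝ) + 1 ≤ 2^k := by
    intro j
    have := hm j
    exact_mod_cast Nat.succ_le_of_lt this
  have hmnn : ∀ j : Fin (n+1), (0:ℝ) ≤ (m j : ℝ) := fun j => Nat.cast_nonneg _
  obtain ⟨h1, h2⟩ := hc
  obtain ⟨p, hp1, hp2⟩ := nonempty_of_measure_ne_zero h1.ne'
  obtain ⟨q, hq1, hq2⟩ := nonempty_of_measure_ne_zero h2.ne'
  simp only [dyadicBox, Set.mem_pi, Set.mem_univ, Set.mem_Ico, forall_const] at hp1 hq1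
  simp only [Set.mem_setOf_eq] at hp2 hq2
  set lb : Fin n → ℝ := fun j => (m j.castSucc : ℝ) / 2^k with hlb
  set ub : Fin n → ℝ := fun j => ((m j.castSucc : ℝ) + 1) / 2^k with hub
  have hlb0 : ∀ j, 0 ≤ lb j := fun j => div_nonneg (hmnn _) hcpos.le
  have hub1 : ∀ j, ub j ≤ 1 := fun j => by
    rw [hub, div_le_one hcpos]; exact hcast _
  constructor
  · have hf1 : f lb ≤ f (fun j => p j.castSucc) := by
      apply hmono _ _ hlb0 (fun j => (hp1 j.castSucc).1)
      intro j
      exact le_trans (le_of_lt (hp1 j.castSucc).2) (hub1 j)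
    have hf2 : f (fun j => p j.castSucc) < ((m (Fin.last n) : ℝ) + 1) / 2^k :=
      lt_trans hp2 (hp1 (Fin.last n)).2
    have hlb1 : ∀ j, lb j ≤ 1 := fun j => by
      rw [hlb, div_le_one hcpos]; linarith [hcast j.castSucc]
    have hnn : 0 ≤ (2:ℝ)^k * f lb :=
      mul_nonneg hcpos.le (hmem lb (fun j => ⟨hlb0 j, hlb1 j⟩)).1
    have hkey : (2:ℝ)^k * f lb < (m (Fin.last n) : ℝ) + 1 := by
      calc (2:ℝ)^k * f lb ≤ 2^k * f (fun j => p j.castSucc) :=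
            mul_le_mul_of_nonneg_left hf1 hcpos.le
        _ < 2^k * (((m (Fin.last n) : ℝ) + 1) / 2^k) :=
            mul_lt_mul_of_pos_left hf2 hcpos
        _ = (m (Fin.last n) : ℝ) + 1 := by field_simp
    have hlt : (2:ℝ)^k * f lb < ((m (Fin.last n) + 1 : ℕ) : ℝ) := by push_cast; linarith
    exact Nat.lt_succ_iff.1 ((Nat.floor_lt hnn).2 hlt)
  · have hf1 : f (fun j => q j.castSucc) ≤ f ub := by
      apply hmono _ _ (fun j => le_trans (hlb0 j) (hq1 j.castSucc).1)
      · intro j; exact le_of_lt (hq1 j.castSucc).2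
      · exact hub1
    have hf2 : (m (Fin.last n) : ℝ) / 2^k < f ub :=
      lt_of_le_of_lt (hq1 (Fin.last n)).1 (lt_of_lt_of_le hq2 hf1)
    apply Nat.le_floor
    have : (m (Fin.last n) : ℝ) < 2^k * f ub := by
      have h := mul_lt_mul_of_pos_left hf2 hcpos
      calc (m (Fin.last n) : ℝ) = 2^k * ((m (Fin.last n) : ℝ)/2^k) := by field_simp
        _ < 2^k * f ub := h
    exact this.le

theorem stmt_5 (n : ℕ) (hn : 1 ≤ n) (f : (Fin n → ℝ) → ℝ)
    (hmono : ∀ x y : Fin n → ℝ, (∀ j, 0 ≤ x j) → (∀ j, x j ≤ y j) →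
      (∀ j, y j ≤ 1) → f x ≤ f y)
    (hmem : ∀ x : Fin n → ℝ, (∀ j, 0 ≤ x j ∧ x j ≤ 1) → 0 ≤ f x ∧ f x < 1)
    (k : ℕ) :
    volume (⋃ m ∈ {m : Fin (n + 1) → ℕ |
        (∀ j, m j < 2 ^ k) ∧ Crosses n f (dyadicBox n (fun _ => k) m)},
      dyadicBox n (fun _ => k) m) ≤
      ENNReal.ofReal ((n + 1 : ℝ) * ((2 : ℝ) ^ k)⁻¹) := by
  classical
  have hcpos : (0:ℝ) < 2^k := by positivity
  set F : Finset (Fin (n+1) → ℕ) :=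
    (Fintype.piFinset fun _ : Fin (n+1) => Finset.range (2^k)).filter
      (fun m => Crosses n f (dyadicBox n (fun _ => k) m)) with hF
  have hset : {m : Fin (n + 1) → ℕ |
      (∀ j, m j < 2 ^ k) ∧ Crosses n f (dyadicBox n (fun _ => k) m)} = ↑F := by
    ext m
    simp [hF, Fintype.mem_piFinset, Finset.mem_filter]
  rw [hset, Finset.set_biUnion_coe]
  -- volume of a single box
  have hvol : ∀ m : Fin (n+1) → ℕ, volume (dyadicBox n (fun _ => k) m)
      = ENNReal.ofReal (((2:ℝ)^k)⁻¹) ^ (n+1) := by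
    intro m
    rw [dyadicBox, volume_pi_pi]
    have heach : ∀ j : Fin (n+1),
        volume (Set.Ico ((m j : ℝ)/2^k) (((m j : ℝ) + 1)/2^k))
          = ENNReal.ofReal (((2:ℝ)^k)⁻¹) := by
      intro j
      rw [Real.volume_Ico]
      congr 1
      field_simp
      ring
    rw [Finset.prod_congr rfl (fun j _ => heach j), Finset.prod_const, Finset.card_univ,
      Fintype.card_fin]
  -- cardinality bound
  have hcard : F.card ≤ (n+1) * (2^k)^n := by
    set B : (Fin n → ℕ) → ℕ := fun b => ⌊(2:ℝ)^k * f (fun j => (b j : ℝ) / 2^k)⌋₊ with hB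
    have hBmono : ∀ b c : Fin n → ℕ, (∀ j, b j ≤ c j) → (∀ j, c j ≤ 2^k) → B b ≤ B c := by
      intro b c hbc hc2
      apply Nat.floor_le_floor
      apply mul_le_mul_of_nonneg_left _ hcpos.le
      apply hmono
      · intro j; positivity
      · intro j
        have hle : (b j : ℝ) ≤ c j := by exact_mod_cast hbc j
        gcongr
      · intro j
        rw [div_le_one hcpos]
        exact_mod_cast hc2 j
    have hBlt : ∀ b : Fin n → ℕ, (∀ j, b j ≤ 2^k) → B b < 2^k := by
      intro b hb
      have hdom : ∀ j, 0 ≤ (b j : ℝ)/2^k ∧ (b j : ℝ)/2^k ≤ 1 := by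
        intro j
        constructor
        · positivity
        · rw [div_le_one hcpos]; exact_mod_cast hb j
      obtain ⟨hf0, hf1⟩ := hmem _ hdom
      have : (2:ℝ)^k * f (fun j => (b j : ℝ)/2^k) < ((2^k : ℕ) : ℝ) := by
        push_cast
        nlinarith
      exact (Nat.floor_lt (mul_nonneg hcpos.le hf0)).2 this
    have hinj : Set.InjOn
        (fun m : Fin (n+1) → ℕ => (⟨fun j => m j.castSucc, m (Fin.last n)⟩ : Σ _ : Fin n → ℕ, ℕ))
        ↑F := by
      intro a _ b _ h
      have h1 : (fun j : Fin n => a j.castSucc) = (fun j : Fin n => b j.castSucc) := congrArg Sigma.fst h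
      have h2 : a (Fin.last n) = b (Fin.last n) := congrArg Sigma.snd h
      funext i
      refine Fin.lastCases ?_ ?_ i
      · exact h2
      · intro j; exact congrFun h1 j
    have hmap : ∀ m ∈ F,
        (⟨fun j => m j.castSucc, m (Fin.last n)⟩ : Σ _ : Fin n → ℕ, ℕ) ∈
          (Fintype.piFinset (fun _ : Fin n => Finset.range (2^k))).sigma
            (fun b => Finset.Icc (B b) (B (fun j => b j + 1))) := by
      intro m hm
      rw [hF, Finset.mem_filter] at hm
      obtain ⟨hm1, hm2⟩ := hm
      have hmlt : ∀ j, m j < 2^k := by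
        intro j
        have := Fintype.mem_piFinset.1 hm1 j
        simpa using this
      obtain ⟨hlo, hhi⟩ := cross_bounds n k f hmono hmem m hmlt hm2
      refine Finset.mem_sigma.2 ⟨?_, ?_⟩
      · exact Fintype.mem_piFinset.2 fun j => Finset.mem_range.2 (hmlt j.castSucc)
      · refine Finset.mem_Icc.2 ⟨?_, ?_⟩
        · exact hlo
        · simp only [hB]
          exact_mod_cast hhi
    have h := Finset.card_le_card_of_injOn _ hmap hinj
    rw [Finset.card_sigma] at h
    exact le_trans h (sum_card_icc_le n k hn B hBmono hBlt)
  calc volume (⋃ m ∈ F, dyadicBox n (fun _ => k) m)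
      ≤ ∑ m ∈ F, volume (dyadicBox n (fun _ => k) m) := measure_biUnion_finset_le F _
    _ = F.card • ENNReal.ofReal (((2:ℝ)^k)⁻¹) ^ (n+1) := by
        rw [Finset.sum_congr rfl fun m _ => hvol m, Finset.sum_const]
    _ = (F.card : ENNReal) * ENNReal.ofReal (((2:ℝ)^k)⁻¹) ^ (n+1) := nsmul_eq_mul _ _
    _ ≤ (((n+1) * (2^k)^n : ℕ) : ENNReal) * ENNReal.ofReal (((2:ℝ)^k)⁻¹) ^ (n+1) := by
        gcongr

    _ = ENNReal.ofReal ((n + 1 : ℝ) * ((2 : ℝ) ^ k)⁻¹) := by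
        rw [← ENNReal.ofReal_pow (by positivity), ← ENNReal.ofReal_natCast,
          ← ENNReal.ofReal_mul (by positivity)]
        congr 1
        push_cast
        rw [inv_pow]
        field_simp
        ring
end

section
/- For every integer n ≥ 1, the double series ∑_{k=0}^∞ ∑_{i=0}^n (1 − (2^{k+1}−1)^i (2^k−1)^{n+1−i} / 2^{k(n+1)+i}) converges and its sum is at most 2(n+1)^2. -/
lemma aux_rw (n k i : ℕ) (hi : i ≤ n + 1) :
    ((2 : ℝ) ^ (k + 1) - 1) ^ i * ((2 : ℝ) ^ k - 1) ^ (n + 1 - i) /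
        2 ^ (k * (n + 1) + i)
      = (1 - (1/2 : ℝ) ^ (k + 1)) ^ i * (1 - (1/2 : ℝ) ^ k) ^ (n + 1 - i) := by
  have h1 : (1 - (1/2 : ℝ) ^ (k + 1)) = ((2 : ℝ) ^ (k + 1) - 1) / 2 ^ (k + 1) := by
    rw [one_div, inv_pow]
    field_simp
  have h2 : (1 - (1/2 : ℝ) ^ k) = ((2 : ℝ) ^ k - 1) / 2 ^ k := by
    rw [one_div, inv_pow]
    field_simp
  rw [h1, h2, div_pow, div_pow, div_mul_div_comm, ← pow_mul, ← pow_mul, ← pow_add]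
  obtain ⟨m, hm⟩ : ∃ m, n + 1 = i + m := ⟨n + 1 - i, by omega⟩
  have h' : n + 1 - i = m := by omega
  rw [h', hm]; ring_nf

lemma aux_bound (n k i : ℕ) (hi : i ≤ n + 1) :
    0 ≤ 1 - (1 - (1/2 : ℝ) ^ (k + 1)) ^ i * (1 - (1/2 : ℝ) ^ k) ^ (n + 1 - i) ∧
    1 - (1 - (1/2 : ℝ) ^ (k + 1)) ^ i * (1 - (1/2 : ℝ) ^ k) ^ (n + 1 - i)
      ≤ (n + 1 : ℝ) * (1/2) ^ k := by
  set A : ℝ := 1 - (1/2 : ℝ) ^ (k + 1) with hA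
  set B : ℝ := 1 - (1/2 : ℝ) ^ k with hB
  have hhalf : (0:ℝ) ≤ (1/2:ℝ)^k := by positivity
  have hhalf1 : (1/2:ℝ)^k ≤ 1 := pow_le_one₀ (by norm_num) (by norm_num)
  have hhalf1' : (1/2:ℝ)^(k+1) ≤ 1 := pow_le_one₀ (by norm_num) (by norm_num)
  have hhalf' : (0:ℝ) ≤ (1/2:ℝ)^(k+1) := by positivity
  have hB0 : 0 ≤ B := by rw [hB]; linarith
  have hA0 : 0 ≤ A := by rw [hA]; linarith
  have hA1 : A ≤ 1 := by rw [hA]; linarith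
  have hB1 : B ≤ 1 := by rw [hB]; linarith
  have hBA : B ≤ A := by
    simp only [hA, hB]
    have : (1/2:ℝ)^(k+1) ≤ (1/2:ℝ)^k :=
      pow_le_pow_of_le_one (by norm_num) (by norm_num) (by omega)
    linarith
  have hprod_le : A ^ i * B ^ (n + 1 - i) ≤ 1 := by
    calc A ^ i * B ^ (n + 1 - i) ≤ 1 * 1 := by
          apply mul_le_mul (pow_le_one₀ hA0 hA1) (pow_le_one₀ hB0 hB1) (by positivity)
          norm_num
      _ = 1 := by ring
  have hprod_ge : B ^ (n + 1) ≤ A ^ i * B ^ (n + 1 - i) := by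
    have : B ^ (n + 1) = B ^ i * B ^ (n + 1 - i) := by
      rw [← pow_add]; congr 1; omega
    rw [this]
    exact mul_le_mul_of_nonneg_right (pow_le_pow_left₀ hB0 hBA i) (by positivity)
  have hBern : 1 - (n + 1 : ℝ) * (1/2) ^ k ≤ B ^ (n + 1) := by
    have := one_add_mul_le_pow (a := -(1/2:ℝ)^k) (by linarith) (n + 1)
    have h2 : (1 : ℝ) + (↑(n+1)) * (-(1/2:ℝ)^k) = 1 - (n+1:ℝ) * (1/2)^k := by
      push_cast; ring
    rw [h2] at this
    simpa [hB, sub_eq_add_neg] using this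
  constructor
  · linarith
  · linarith

theorem stmt_7 (n : ℕ) (hn : 1 ≤ n) :
    Summable (fun k : ℕ => ∑ i ∈ Finset.range (n + 1),
      (1 - ((2 : ℝ) ^ (k + 1) - 1) ^ i * ((2 : ℝ) ^ k - 1) ^ (n + 1 - i) /
        2 ^ (k * (n + 1) + i))) ∧
    (∑' k : ℕ, ∑ i ∈ Finset.range (n + 1),
      (1 - ((2 : ℝ) ^ (k + 1) - 1) ^ i * ((2 : ℝ) ^ k - 1) ^ (n + 1 - i) /
        2 ^ (k * (n + 1) + i))) ≤ 2 * (n + 1 : ℝ) ^ 2 := by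
  set f : ℕ → ℝ := fun k => ∑ i ∈ Finset.range (n + 1),
      (1 - ((2 : ℝ) ^ (k + 1) - 1) ^ i * ((2 : ℝ) ^ k - 1) ^ (n + 1 - i) /
        2 ^ (k * (n + 1) + i)) with hf
  have hf0 : ∀ k, 0 ≤ f k := by
    intro k
    apply Finset.sum_nonneg
    intro i hi
    have hi' : i ≤ n + 1 := by
      have := Finset.mem_range.mp hi; omega
    rw [aux_rw n k i hi']
    exact (aux_bound n k i hi').1
  have hfle : ∀ k, f k ≤ (n + 1 : ℝ)^2 * (1/2)^k := by
    intro k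
    have : f k ≤ ∑ i ∈ Finset.range (n + 1), (n + 1 : ℝ) * (1/2)^k := by
      apply Finset.sum_le_sum
      intro i hi
      have hi' : i ≤ n + 1 := by
        have := Finset.mem_range.mp hi; omega
      rw [aux_rw n k i hi']
      exact (aux_bound n k i hi').2
    simpa [Finset.sum_const, Finset.card_range, sq, mul_assoc] using this
  have hg : Summable (fun k : ℕ => (n + 1 : ℝ)^2 * (1/2)^k) :=
    (summable_geometric_of_lt_one (by norm_num) (by norm_num)).mul_left _
  have hsum : Summable f := Summable.of_nonneg_of_le hf0 hfle hg
  refine ⟨hsum, ?_⟩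
  have h1 : ∑' k, f k ≤ ∑' k : ℕ, (n + 1 : ℝ)^2 * (1/2)^k :=
    Summable.tsum_le_tsum hfle hsum hg
  have h2 : ∑' k : ℕ, (n + 1 : ℝ)^2 * (1/2)^k = 2 * (n + 1 : ℝ)^2 := by
    rw [tsum_mul_left, tsum_geometric_of_lt_one (by norm_num) (by norm_num)]
    norm_num [mul_comm]
  linarith
end
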